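/- arXiv:1308.2604 — 3 statements merged into one kernel-verified Lean document; each statement's English description precedes it below -/
import Mathlib

section
/- Let k be a field, A a Z-graded commutative k-algebra, and R any commutative k-algebra. Grade the polynomial ring R[t] by placing R in degree 0 and t in degree 1. Then composition with the evaluation homomorphism R[t] -> R, t |-> 1, is a bijection from the set of graded k-algebra homomorphisms A -> R[t] onto the set of k-algebra homomorphisms A -> R that vanish on every homogeneous element of A of strictly negative degree (equivalently, onto the set of k-algebra homomorphisms A^+ -> R). In particular, the inverse bijection sends a homomorphism psi : A -> R killing all negative-degree homogeneous elements to the graded homomorphism a |-> sum_{n >= 0} psi(a_n) t^n, where a_n is the degree-n component of a. -/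
open scoped Classical

/-- `φ : A →ₐ[k] R[t]` is a graded homomorphism, where `R[t]` is graded with `R` in
degree `0` and `t` in degree `1`: the degree-`n` component of `A` is sent into `R·tⁿ`
for `n ≥ 0`, and to `0` for `n < 0` (the degree-`n` component of `R[t]` being zero
for negative `n`). -/
def IsGradedToPoly {k A R : Type*} [CommSemiring k] [CommRing A] [Algebra k A]
    [CommRing R] [Algebra k R] (𝒜 : ℤ → Submodule k A) (φ : A →ₐ[k] Polynomial R) : Prop :=
  ∀ n : ℤ, ∀ a ∈ 𝒜 n,
    if 0 ≤ n then ∃ r : R, φ a = Polynomial.C r * Polynomial.X ^ n.toNat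
    else φ a = 0

/-- Composition with the evaluation `R[t] → R`, `t ↦ 1`, as a `k`-algebra homomorphism. -/
noncomputable def evalOne (k R : Type*) [CommSemiring k] [CommRing R] [Algebra k R] :
    Polynomial R →ₐ[k] R :=
  (Polynomial.aeval (1 : R)).restrictScalars k

section Aux

variable {k A R : Type*} [Field k] [CommRing A] [Algebra k A]
    (𝒜 : ℤ → Submodule k A) [GradedAlgebra 𝒜] [CommRing R] [Algebra k R]

lemma evalOne_C_mul_X_pow (r : R) (m : ℕ) :
    evalOne k R (Polynomial.C r * Polynomial.X ^ m) = r := by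
  simp [evalOne]

lemma graded_apply_eq (φ : A →ₐ[k] Polynomial R) (hφ : IsGradedToPoly 𝒜 φ)
    {n : ℤ} {a : A} (ha : a ∈ 𝒜 n) :
    φ a = Polynomial.C (evalOne k R (φ a)) * Polynomial.X ^ n.toNat := by
  have h := hφ n a ha
  split_ifs at h with h0
  · obtain ⟨r, hr⟩ := h
    rw [hr, evalOne_C_mul_X_pow]
  · rw [h]; simp

/-- Two algebra homs agreeing on homogeneous elements are equal. -/
lemma homog_ext {S : Type*} [CommRing S] [Algebra k S] (f g : A →ₐ[k] S)
    (h : ∀ n : ℤ, ∀ a ∈ 𝒜 n, f a = g a) : f = g := by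
  ext a
  rw [← DirectSum.sum_support_decompose 𝒜 a, map_sum, map_sum]
  exact Finset.sum_congr rfl fun n _ => h n _ (SetLike.coe_mem _)

variable {𝒜}

/-- The family of component maps used to build the graded lift of `ψ`. -/
noncomputable def compMap (ψ : A →ₐ[k] R) (n : ℤ) : 𝒜 n →ₗ[k] Polynomial R where
  toFun a := Polynomial.C (ψ a) * Polynomial.X ^ n.toNat
  map_add' x y := by simp [add_mul]
  map_smul' c x := by
    simp only [SetLike.val_smul, map_smul, RingHom.id_apply]
    rw [Algebra.smul_def, Algebra.smul_def, map_mul, Polynomial.algebraMap_apply, mul_assoc]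

/-- The graded lift of `ψ`, on the direct sum. -/
noncomputable def liftAlg (ψ : A →ₐ[k] R) (hψ : ∀ n < (0 : ℤ), ∀ a ∈ 𝒜 n, ψ a = 0) :
    DirectSum ℤ (fun n => 𝒜 n) →ₐ[k] Polynomial R :=
  DirectSum.toAlgebra k (fun n => 𝒜 n) (compMap ψ)
    (by simp [compMap, SetLike.coe_gOne])
    (by
      intro i j ai aj
      simp only [compMap, LinearMap.coe_mk, AddHom.coe_mk, SetLike.coe_gMul, map_mul]
      by_cases hi : 0 ≤ i
      · by_cases hj : 0 ≤ j
        · rw [Int.toNat_add hi hj, pow_add]; ring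
        · have : ψ aj = 0 := hψ j (lt_of_not_ge hj) _ (SetLike.coe_mem aj)
          simp [this]
      · have : ψ ai = 0 := hψ i (lt_of_not_ge hi) _ (SetLike.coe_mem ai)
        simp [this])

/-- The graded lift of `ψ`. -/
noncomputable def gradedLift (ψ : A →ₐ[k] R) (hψ : ∀ n < (0 : ℤ), ∀ a ∈ 𝒜 n, ψ a = 0) :
    A →ₐ[k] Polynomial R :=
  (liftAlg ψ hψ).comp (DirectSum.decomposeAlgEquiv 𝒜).toAlgHom

lemma gradedLift_apply_of_mem (ψ : A →ₐ[k] R) (hψ : ∀ n < (0 : ℤ), ∀ a ∈ 𝒜 n, ψ a = 0)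
    {n : ℤ} {a : A} (ha : a ∈ 𝒜 n) :
    gradedLift ψ hψ a = Polynomial.C (ψ a) * Polynomial.X ^ n.toNat := by
  have h1 : DirectSum.decompose 𝒜 a = DirectSum.of (fun i => 𝒜 i) n ⟨a, ha⟩ :=
    DirectSum.decompose_of_mem 𝒜 ha
  have h2 : gradedLift ψ hψ a = liftAlg ψ hψ (DirectSum.of (fun i => 𝒜 i) n ⟨a, ha⟩) := by
    rw [← h1]; rfl
  rw [h2, liftAlg, DirectSum.toAlgebra_apply]
  erw [DirectSum.toSemiring_of]
  rfl

end Aux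

/-- Let `k` be a field, `A` a `ℤ`-graded commutative `k`-algebra and `R` a
commutative `k`-algebra.  Composition with the evaluation `R[t] → R`, `t ↦ 1`, is a
bijection from the set of graded `k`-algebra homomorphisms `A → R[t]` onto the set of
`k`-algebra homomorphisms `A → R` vanishing on all homogeneous elements of strictly
negative degree; moreover the inverse sends `ψ` to `a ↦ ∑_{n} ψ(aₙ) tⁿ` (the terms with
`n < 0` vanish). -/
theorem stmt_0 {k A R : Type*} [Field k] [CommRing A] [Algebra k A]
    (𝒜 : ℤ → Submodule k A) [GradedAlgebra 𝒜] [CommRing R] [Algebra k R] :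
    (∀ ψ : A →ₐ[k] R,
      (∀ n < (0 : ℤ), ∀ a ∈ 𝒜 n, ψ a = 0) ↔
        ∃! φ : A →ₐ[k] Polynomial R,
          IsGradedToPoly 𝒜 φ ∧ (evalOne k R).comp φ = ψ) ∧
    (∀ φ : A →ₐ[k] Polynomial R, IsGradedToPoly 𝒜 φ → ∀ a : A,
      φ a = ∑ n ∈ (DirectSum.decompose 𝒜 a).support,
        Polynomial.C (evalOne k R (φ (DirectSum.decompose 𝒜 a n))) *
          Polynomial.X ^ n.toNat) := by
  constructor
  · intro ψ
    constructor
    · intro hψ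
      refine ⟨gradedLift ψ hψ, ⟨?_, ?_⟩, ?_⟩
      · intro n a ha
        rw [gradedLift_apply_of_mem ψ hψ ha]
        split_ifs with h0
        · exact ⟨ψ a, rfl⟩
        · rw [hψ n (lt_of_not_ge h0) a ha]; simp
      · apply homog_ext 𝒜
        intro n a ha
        rw [AlgHom.comp_apply, gradedLift_apply_of_mem ψ hψ ha, evalOne_C_mul_X_pow]
      · rintro φ' ⟨hg, hc⟩
        apply homog_ext 𝒜
        intro n a ha
        rw [graded_apply_eq 𝒜 φ' hg ha, gradedLift_apply_of_mem ψ hψ ha,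
          ← AlgHom.comp_apply, hc]
    · rintro ⟨φ, ⟨hg, hc⟩, -⟩ n hn a ha
      have h0 : φ a = 0 := by
        have := hg n a ha
        rwa [if_neg (not_le.mpr hn)] at this
      rw [← hc, AlgHom.comp_apply, h0, map_zero]
  · intro φ hφ a
    conv_lhs => rw [← DirectSum.sum_support_decompose 𝒜 a]
    rw [map_sum]
    exact Finset.sum_congr rfl fun n _ =>
      graded_apply_eq 𝒜 φ hφ (SetLike.coe_mem (DirectSum.decompose 𝒜 a n))
end

section
/- Let k be a field, R a commutative k[t]-algebra, and n an integer. Grade the polynomial ring k[x] by declaring x homogeneous of degree n. Let ev_1 : A_R -> R be the R-algebra homomorphism with tau_1 |-> 1, tau_2 |-> t, and ev_2 : A_R -> R the R-algebra homomorphism with tau_1 |-> t, tau_2 |-> 1. Then the map phi |-> (ev_1(phi(x)), ev_2(phi(x))) is a bijection from the set of graded k-algebra homomorphisms k[x] -> A_R onto the set {(x_1, x_2) in R × R : x_2 = t^n x_1} if n >= 0, and onto the set {(x_1, x_2) in R × R : x_1 = t^{-n} x_2} if n <= 0. -/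
/-- The element `τ₁τ₂ - t` of `R[τ₁, τ₂]`. -/
noncomputable def hypGen (R : Type*) [CommRing R] (t : R) : MvPolynomial (Fin 2) R :=
  MvPolynomial.X 0 * MvPolynomial.X 1 - MvPolynomial.C t

/-- The coordinate ring `A_R := R[τ₁, τ₂]/(τ₁τ₂ - t)` of the family of hyperbolas. -/
abbrev HypCoordRing (R : Type*) [CommRing R] (t : R) : Type _ :=
  MvPolynomial (Fin 2) R ⧸ Ideal.span {hypGen R t}

/-- The images of the coordinates `τ₁, τ₂` in `A_R`. -/
noncomputable def hypTau (R : Type*) [CommRing R] (t : R) (i : Fin 2) : HypCoordRing R t :=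
  Ideal.Quotient.mk _ (MvPolynomial.X i)

/-- The element `e_n ∈ A_R`: `e_n = τ₁ⁿ` for `n ≥ 0`, `e_n = τ₂^(-n)` for `n ≤ 0`. -/
noncomputable def hypBasisElt (R : Type*) [CommRing R] (t : R) (n : ℤ) : HypCoordRing R t :=
  if 0 ≤ n then hypTau R t 0 ^ n.toNat else hypTau R t 1 ^ (-n).toNat

/-- Evaluation `A_R → R` at a point `(v 0, v 1)` of the hyperbola `τ₁τ₂ = t`. -/
noncomputable def hypEval (R : Type*) [CommRing R] (t : R) (v : Fin 2 → R)
    (hv : v 0 * v 1 = t) : HypCoordRing R t →ₐ[R] R :=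
  Ideal.Quotient.liftₐ (Ideal.span {hypGen R t}) (MvPolynomial.aeval v) (by
    intro a ha
    obtain ⟨c, rfl⟩ := Ideal.mem_span_singleton.mp ha
    rw [map_mul]
    have hg : (MvPolynomial.aeval v) (hypGen R t) = 0 := by
      simp [hypGen, hv]
    rw [hg, zero_mul])

/-- The degree-`d` component of `k[x]`, where `x` is declared homogeneous of degree
`n : ℤ`: the span of the monomials `x^m` with `m·n = d`. -/
noncomputable def wtGrading (k : Type*) [CommSemiring k] (n d : ℤ) : Submodule k (Polynomial k) :=
  Submodule.span k {p : Polynomial k | ∃ m : ℕ, (m : ℤ) * n = d ∧ p = Polynomial.X ^ m}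

lemma hypBasisElt_pow (R : Type*) [CommRing R] (t : R) (n : ℤ) (m : ℕ) :
    hypBasisElt R t n ^ m = hypBasisElt R t (m * n) := by
  unfold hypBasisElt
  rcases le_or_gt 0 n with hn | hn
  · obtain ⟨c, rfl⟩ := Int.eq_ofNat_of_zero_le hn
    rw [if_pos (by positivity), if_pos (by positivity), ← pow_mul]
    congr 1
    rw [Int.toNat_natCast, ← Nat.cast_mul, Int.toNat_natCast, Nat.mul_comm]
  · rcases Nat.eq_zero_or_pos m with rfl | hm
    · simp
    · have h1 : ¬ (0 ≤ n) := not_le.mpr hn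
      have h2 : ¬ (0 ≤ (m : ℤ) * n) := by
        rw [not_le]; exact mul_neg_of_pos_of_neg (by exact_mod_cast hm) hn
      rw [if_neg h1, if_neg h2, ← pow_mul]
      congr 1
      obtain ⟨c, hc⟩ := Int.eq_ofNat_of_zero_le (neg_nonneg.mpr hn.le)
      rw [show -((m : ℤ) * n) = (m : ℤ) * (-n) by ring, hc,
        Int.toNat_natCast, ← Nat.cast_mul, Int.toNat_natCast, Nat.mul_comm]

lemma hypEval_basis (R : Type*) [CommRing R] (t : R) (v : Fin 2 → R)
    (hv : v 0 * v 1 = t) (d : ℤ) :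
    hypEval R t v hv (hypBasisElt R t d) =
      if 0 ≤ d then v 0 ^ d.toNat else v 1 ^ (-d).toNat := by
  unfold hypBasisElt
  split <;> simp [hypEval, hypTau]

lemma grading_aux (k R : Type*) [CommSemiring k] [CommRing R] [Algebra k R]
    (t : R) (n : ℤ) (r : R) :
    ∀ d : ℤ, ∀ p ∈ wtGrading k n d,
      (Polynomial.aeval (r • hypBasisElt R t n)) p ∈
        Submodule.span R {hypBasisElt R t d} := by
  intro d p hp
  have hle : wtGrading k n d ≤
      ((Submodule.span R {hypBasisElt R t d}).restrictScalars k).comap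
        (Polynomial.aeval (r • hypBasisElt R t n)).toLinearMap := by
    rw [wtGrading, Submodule.span_le]
    rintro _ ⟨m, hm, rfl⟩
    simp only [Set.mem_preimage, SetLike.mem_coe, Submodule.mem_comap,
      AlgHom.toLinearMap_apply, Submodule.restrictScalars_mem]
    rw [map_pow, Polynomial.aeval_X, smul_pow, hypBasisElt_pow, hm]
    exact Submodule.smul_mem _ _ (Submodule.mem_span_singleton_self _)
  exact hle hp


/-- Let `k` be a field, `R` a commutative `k[t]`-algebra, `n ∈ ℤ`, and
grade `k[x]` by `deg x = n`.  The map `φ ↦ (ev₁(φ(x)), ev₂(φ(x)))`, where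
`ev₁ : A_R → R` sends `τ₁ ↦ 1, τ₂ ↦ t` and `ev₂ : A_R → R` sends `τ₁ ↦ t, τ₂ ↦ 1`,
is a bijection from the graded `k`-algebra homomorphisms `k[x] → A_R` onto
`{(x₁, x₂) | x₂ = tⁿ x₁}` if `n ≥ 0`, and onto `{(x₁, x₂) | x₁ = t⁻ⁿ x₂}` if `n ≤ 0`. -/
theorem stmt_5 (k R : Type*) [Field k] [CommRing R] [Algebra (Polynomial k) R]
    [Algebra k R] [IsScalarTower k (Polynomial k) R] (n : ℤ)
    (t : R) (ht : t = algebraMap (Polynomial k) R Polynomial.X) :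
    ∀ x₁ x₂ : R,
      (if 0 ≤ n then x₂ = t ^ n.toNat * x₁ else x₁ = t ^ (-n).toNat * x₂) ↔
      ∃! φ : Polynomial k →ₐ[k] HypCoordRing R t,
        (∀ d : ℤ, ∀ p ∈ wtGrading k n d,
          φ p ∈ Submodule.span R {hypBasisElt R t d}) ∧
        hypEval R t ![1, t] (by simp) (φ Polynomial.X) = x₁ ∧
        hypEval R t ![t, 1] (by simp) (φ Polynomial.X) = x₂ := by
  intro x₁ x₂
  have hXmem : Polynomial.X ∈ wtGrading k n n :=
    Submodule.subset_span ⟨1, by simp, (pow_one _).symm⟩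
  have hb1 : hypEval R t ![1, t] (by simp) (hypBasisElt R t n) =
      if 0 ≤ n then 1 else t ^ (-n).toNat := by
    rw [hypEval_basis]; split <;> simp
  have hb2 : hypEval R t ![t, 1] (by simp) (hypBasisElt R t n) =
      if 0 ≤ n then t ^ n.toNat else 1 := by
    rw [hypEval_basis]; split <;> simp
  rcases le_or_gt 0 n with hn | hn
  · rw [if_pos hn] at *
    constructor
    · intro h
      refine ⟨Polynomial.aeval (x₁ • hypBasisElt R t n), ⟨grading_aux k R t n x₁, ?_, ?_⟩, ?_⟩
      · rw [Polynomial.aeval_X, map_smul, hb1, smul_eq_mul, mul_one]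
      · rw [Polynomial.aeval_X, map_smul, hb2, smul_eq_mul, mul_comm, ← h]
      · rintro ψ ⟨hg, h1, h2⟩
        apply Polynomial.algHom_ext
        obtain ⟨r, hr⟩ := Submodule.mem_span_singleton.mp (hg n Polynomial.X hXmem)
        rw [Polynomial.aeval_X, ← hr]
        rw [← hr, map_smul, hb1, smul_eq_mul, mul_one] at h1
        rw [h1]
    · rintro ⟨φ, ⟨hg, h1, h2⟩, -⟩
      obtain ⟨r, hr⟩ := Submodule.mem_span_singleton.mp (hg n Polynomial.X hXmem)
      rw [← hr, map_smul, hb1, smul_eq_mul, mul_one] at h1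
      rw [← hr, map_smul, hb2, smul_eq_mul] at h2
      rw [← h1, ← h2, mul_comm]
  · have hn' : ¬ (0 ≤ n) := not_le.mpr hn
    rw [if_neg hn'] at *
    constructor
    · intro h
      refine ⟨Polynomial.aeval (x₂ • hypBasisElt R t n), ⟨grading_aux k R t n x₂, ?_, ?_⟩, ?_⟩
      · rw [Polynomial.aeval_X, map_smul, hb1, smul_eq_mul, mul_comm, ← h]
      · rw [Polynomial.aeval_X, map_smul, hb2, smul_eq_mul, mul_one]
      · rintro ψ ⟨hg, h1, h2⟩
        apply Polynomial.algHom_ext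
        obtain ⟨r, hr⟩ := Submodule.mem_span_singleton.mp (hg n Polynomial.X hXmem)
        rw [Polynomial.aeval_X, ← hr]
        rw [← hr, map_smul, hb2, smul_eq_mul, mul_one] at h2
        rw [h2]
    · rintro ⟨φ, ⟨hg, h1, h2⟩, -⟩
      obtain ⟨r, hr⟩ := Submodule.mem_span_singleton.mp (hg n Polynomial.X hXmem)
      rw [← hr, map_smul, hb2, smul_eq_mul, mul_one] at h2
      rw [← hr, map_smul, hb1, smul_eq_mul] at h1
      rw [← h1, ← h2, mul_comm]
end

section
/- Let A, B be schemes and f : A -> B a morphism that is surjective on underlying topological spaces and such that the canonical map O_B -> f_* O_A is an isomorphism. Then f is an epimorphism in the category of schemes: for any scheme Z and morphisms g_1, g_2 : B -> Z with g_1 ∘ f = g_2 ∘ f, one has g_1 = g_2. -/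
open AlgebraicGeometry CategoryTheory

/-- Let `f : A ⟶ B` be a morphism of schemes which is surjective on
underlying topological spaces and such that the canonical map `O_B → f_* O_A` is an
isomorphism (equivalently, each component `f.app U` is an isomorphism).  Then `f` is an
epimorphism in the category of schemes: any two morphisms `g₁ g₂ : B ⟶ Z` with
`f ≫ g₁ = f ≫ g₂` are equal. -/
theorem stmt_11 {A B : Scheme} (f : A ⟶ B) (hsurj : Function.Surjective f.base)
    (hO : ∀ U : B.Opens, IsIso (f.app U))
    (Z : Scheme) (g₁ g₂ : B ⟶ Z) (h : f ≫ g₁ = f ≫ g₂) : g₁ = g₂ := by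
  have hb : g₁.base = g₂.base := by
    ext x
    obtain ⟨a, rfl⟩ := hsurj x
    have : (f ≫ g₁).base a = (f ≫ g₂).base a := by rw [h]
    simpa using this
  apply Scheme.Hom.ext hb
  intro U
  have happ := Scheme.Hom.congr_app h U
  simp only [Scheme.Hom.comp_app] at happ
  have e : g₁ ⁻¹ᵁ U = g₂ ⁻¹ᵁ U := by
    show (TopologicalSpace.Opens.map g₁.base).obj U = (TopologicalSpace.Opens.map g₂.base).obj U
    rw [hb]
  haveI := hO (g₂ ⁻¹ᵁ U)
  rw [← cancel_mono (f.app (g₂ ⁻¹ᵁ U))]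
  simp only [Category.assoc]
  rw [f.naturality ((eqToHom e.symm).op), ← Category.assoc, happ]
  simp [← Functor.map_comp, eqToHom_map, eqToHom_op, eqToHom_trans]
  congr 2; convert Category.comp_id _ using 2; erw [eqToHom_op, eqToHom_map, eqToHom_trans]; rfl
end
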